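/- For all ρ > 0, μ > 0 and κ > 0, the function θ_{ρ,μ,κ} is strongly convex with modulus κ, possesses a unique global minimizer p_DS* on ℝ^m, is differentiable with gradient ∇θ_{ρ,μ,κ}(p) = A x_{ρ,p} − x_{μ,p} + κ p for every p ∈ ℝ^m, and this gradient is Lipschitz continuous with constant L(ρ,μ,κ) = ‖A‖²/ρ + 1/μ + κ. -/

import Mathlib

open scoped RealInnerProductSpace
noncomputable section

/-- `Euc k` is the Euclidean space `ℝ^k`. -/
abbrev Euc (k : ℕ) := EuclideanSpace ℝ (Fin k)

/-- `f` is proper: nowhere `-∞` and somewhere finite. -/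
def IsProperFn {k : ℕ} (f : Euc k → EReal) : Prop :=
  (∀ x, f x ≠ ⊥) ∧ ∃ x, f x ≠ ⊤

/-- Convexity of an extended-real-valued function. -/
def IsConvexFn {k : ℕ} (f : Euc k → EReal) : Prop :=
  ∀ x y : Euc k, ∀ t : ℝ, 0 < t → t < 1 →
    f (t • x + (1 - t) • y) ≤ (t : EReal) * f x + ((1 - t : ℝ) : EReal) * f y

/-- `f` is proper, convex, lower semicontinuous with bounded effective domain. -/
def NiceFn {k : ℕ} (f : Euc k → EReal) : Prop :=
  IsProperFn f ∧ IsConvexFn f ∧ LowerSemicontinuous f ∧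
    Bornology.IsBounded {x | f x ≠ ⊤}

/-- The Fenchel conjugate `f*(q) = sup_x {⟨q,x⟩ - f(x)}` (real-valued). -/
noncomputable def conjFn {k : ℕ} (f : Euc k → EReal) (q : Euc k) : ℝ :=
  (⨆ x, ((⟪q, x⟫ : ℝ) : EReal) - f x).toReal

/-- The Fenchel conjugate as an extended real. -/
noncomputable def conjE {k : ℕ} (f : Euc k → EReal) (q : Euc k) : EReal :=
  ⨆ x, ((⟪q, x⟫ : ℝ) : EReal) - f x

/-- The smoothed conjugate `f_r*(q) = sup_x {⟨q,x⟩ - f(x) - (r/2)‖x‖²}`. -/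
noncomputable def conjSm {k : ℕ} (f : Euc k → EReal) (r : ℝ) (q : Euc k) : ℝ :=
  (⨆ x, ((⟪q, x⟫ - r / 2 * ‖x‖ ^ 2 : ℝ) : EReal) - f x).toReal

/-- The proximal objective `x ↦ f(x) + (r/2)‖u - x‖²`. -/
noncomputable def proxObj {k : ℕ} (f : Euc k → EReal) (r : ℝ) (u x : Euc k) : EReal :=
  f x + ((r / 2 * ‖u - x‖ ^ 2 : ℝ) : EReal)

/-- `D_f = sup {‖x‖²/2 : x ∈ dom f}`. -/
noncomputable def Dsup {k : ℕ} (f : Euc k → EReal) : ℝ :=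
  sSup ((fun x : Euc k => ‖x‖ ^ 2 / 2) '' {x | f x ≠ ⊤})

/-- `x0` is the unique global minimizer of `h`. -/
def UniqMin {α : Type*} {β : Type*} [Preorder β] (h : α → β) (x0 : α) : Prop :=
  (∀ x, h x0 ≤ h x) ∧ ∀ x, (∀ y, h x ≤ h y) → x = x0

/-- The dual objective `θ(p) = f*(A*p) + g*(-p)`. -/
noncomputable def theta {n m : ℕ} (f : Euc n → EReal) (g : Euc m → EReal)
    (A : Euc n →L[ℝ] Euc m) (p : Euc m) : ℝ :=
  conjFn f (ContinuousLinearMap.adjoint A p) + conjFn g (-p)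

/-- The singly smoothed dual objective `θ_{ρ,μ}(p) = f_ρ*(A*p) + g_μ*(-p)`. -/
noncomputable def thetaSm {n m : ℕ} (f : Euc n → EReal) (g : Euc m → EReal)
    (A : Euc n →L[ℝ] Euc m) (r s : ℝ) (p : Euc m) : ℝ :=
  conjSm f r (ContinuousLinearMap.adjoint A p) + conjSm g s (-p)

/-- The doubly smoothed dual objective `θ_{ρ,μ,κ}(p) = θ_{ρ,μ}(p) + (κ/2)‖p‖²`. -/
noncomputable def thetaSmK {n m : ℕ} (f : Euc n → EReal) (g : Euc m → EReal)
    (A : Euc n →L[ℝ] Euc m) (r s c : ℝ) (p : Euc m) : ℝ :=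
  thetaSm f g A r s p + c / 2 * ‖p‖ ^ 2

/-- The optimal value of the primal problem `v(P) = inf {f(x) + g(Ax)}`. -/
noncomputable def vPrimal {n m : ℕ} (f : Euc n → EReal) (g : Euc m → EReal)
    (A : Euc n →L[ℝ] Euc m) : EReal := ⨅ x, f x + g (A x)

/-- The optimal value of the dual problem `v(D) = -inf θ`. -/
noncomputable def vDual {n m : ℕ} (f : Euc n → EReal) (g : Euc m → EReal)
    (A : Euc n →L[ℝ] Euc m) : ℝ := -(⨅ p, theta f g A p)

lemma prox_finite {k : ℕ} {f : Euc k → EReal} (hf : NiceFn f) {r : ℝ} {u x0 : Euc k}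
    (h : UniqMin (proxObj f r u) x0) : f x0 ≠ ⊤ ∧ f x0 ≠ ⊥ := by
  obtain ⟨⟨hbot, x1, hx1⟩, -, -, -⟩ := hf
  refine ⟨?_, hbot x0⟩
  intro htop
  have h1 := h.1 x1
  rw [proxObj, proxObj, htop, EReal.top_add_coe] at h1
  exact not_top_lt (lt_of_le_of_lt h1 (EReal.add_lt_top hx1 (EReal.coe_ne_top _)))

lemma prox_min_real {k : ℕ} {f : Euc k → EReal} (hf : NiceFn f) {r : ℝ} {u x0 : Euc k}
    (h : UniqMin (proxObj f r u) x0) {z : Euc k} (hz : f z ≠ ⊤) :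
    (f x0).toReal + r / 2 * ‖u - x0‖ ^ 2 ≤ (f z).toReal + r / 2 * ‖u - z‖ ^ 2 := by
  have h0 := prox_finite hf h
  have h1 := h.1 z
  rw [proxObj, proxObj, ← EReal.coe_toReal h0.1 h0.2, ← EReal.coe_toReal hz (hf.1.1 z),
    ← EReal.coe_add, ← EReal.coe_add, EReal.coe_le_coe_iff] at h1
  exact h1

lemma norm_expand {k : ℕ} (u x0 z : Euc k) :
    ‖u - z‖ ^ 2 = ‖u - x0‖ ^ 2 - 2 * ⟪u - x0, z - x0⟫ + ‖z - x0‖ ^ 2 := by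
  have : u - z = (u - x0) - (z - x0) := by abel
  rw [this, norm_sub_sq_real]

lemma prox_strong {k : ℕ} {f : Euc k → EReal} (hf : NiceFn f) {r : ℝ} (hr : 0 < r)
    {u x0 : Euc k} (h : UniqMin (proxObj f r u) x0) {z : Euc k} (hz : f z ≠ ⊤) :
    (f x0).toReal + r / 2 * ‖u - x0‖ ^ 2 + r / 2 * ‖z - x0‖ ^ 2
      ≤ (f z).toReal + r / 2 * ‖u - z‖ ^ 2 := by
  have h0 := prox_finite hf h
  set a := (f x0).toReal with ha
  set b := (f z).toReal with hb
  -- step 1 : a ≤ b - r * ⟪u - x0, z - x0⟫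
  have step : a ≤ b - r * ⟪u - x0, z - x0⟫ := by
    refine le_of_forall_pos_le_add fun ε hε => ?_
    set C := r / 2 * ‖z - x0‖ ^ 2 with hC
    have hC0 : 0 ≤ C := by positivity
    set t := min (1/2 : ℝ) (ε / (C + 1)) with ht
    have ht0 : 0 < t := lt_min (by norm_num) (by positivity)
    have ht1 : t < 1 := lt_of_le_of_lt (min_le_left _ _) (by norm_num)
    -- convexity at w = t • z + (1 - t) • x0
    set w := t • z + (1 - t) • x0 with hw
    have hconv := hf.2.1 z x0 t ht0 ht1
    rw [← hw, ← EReal.coe_toReal hz (hf.1.1 z), ← EReal.coe_toReal h0.1 h0.2,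
      ← EReal.coe_mul, ← EReal.coe_mul, ← EReal.coe_add] at hconv
    have hwtop : f w ≠ ⊤ := ne_top_of_le_ne_top (EReal.coe_ne_top _) hconv
    have hwreal : (f w).toReal ≤ t * b + (1 - t) * a := by
      rw [← EReal.coe_le_coe_iff, EReal.coe_toReal hwtop (hf.1.1 w)]; exact hconv
    have hmin := prox_min_real hf h hwtop
    have hexp : ‖u - w‖ ^ 2 = ‖u - x0‖ ^ 2 - 2 * t * ⟪u - x0, z - x0⟫ + t ^ 2 * ‖z - x0‖ ^ 2 := by
      have huw : u - w = (u - x0) - t • (z - x0) := by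
        rw [hw]; module
      rw [huw, norm_sub_sq_real, real_inner_smul_right, norm_smul, Real.norm_eq_abs,
        mul_pow, sq_abs]
      ring
    have hdiv : a ≤ b - r * ⟪u - x0, z - x0⟫ + t * C := by
      rw [hexp] at hmin
      have := hmin.trans (add_le_add hwreal le_rfl)
      nlinarith [this, ht0]
    have htC : t * C ≤ ε := by
      have h1 : t ≤ ε / (C + 1) := min_le_right _ _
      have : t * C ≤ (ε / (C + 1)) * C := by nlinarith
      calc t * C ≤ (ε / (C + 1)) * C := this
        _ ≤ ε := by rw [div_mul_eq_mul_div, div_le_iff₀ (by linarith)]; nlinarith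
    linarith
  have := norm_expand u x0 z
  nlinarith [step]

lemma prox_lip {k : ℕ} {f : Euc k → EReal} (hf : NiceFn f) {r : ℝ} (hr : 0 < r)
    {u u' x0 x0' : Euc k} (h : UniqMin (proxObj f r u) x0)
    (h' : UniqMin (proxObj f r u') x0') : ‖x0' - x0‖ ≤ ‖u' - u‖ := by
  have h0 := prox_finite hf h
  have h0' := prox_finite hf h'
  have e1 := prox_strong hf hr h h0'.1
  have e2 := prox_strong hf hr h' h0.1
  -- sum gives r * ‖Δ‖² ≤ r * ⟪u' - u, x0' - x0⟫
  have key : ‖x0' - x0‖ ^ 2 ≤ ⟪u' - u, x0' - x0⟫ := by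
    have i1 := norm_expand u x0 x0'
    have i2 := norm_expand u' x0' x0
    have i3 : ‖x0 - x0'‖ = ‖x0' - x0‖ := by rw [← norm_neg]; congr 1; abel
    have i4 : ⟪u' - x0', x0 - x0'⟫ = -⟪u' - x0', x0' - x0⟫ := by
      rw [← inner_neg_right]; congr 1; abel
    have i5 : ⟪u' - x0', x0' - x0⟫ - ⟪u - x0, x0' - x0⟫ = ⟪u' - u, x0' - x0⟫ - ‖x0' - x0‖ ^ 2 := by
      have e : (u' - x0') - (u - x0) = (u' - u) - (x0' - x0) := by abel
      have h1 := inner_sub_left (𝕜 := ℝ) (u' - x0') (u - x0) (x0' - x0)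
      have h2 := inner_sub_left (𝕜 := ℝ) (u' - u) (x0' - x0) (x0' - x0)
      rw [← h1, e, h2, real_inner_self_eq_norm_sq]
    nlinarith [e1, e2, i1, i2, i3, i4, i5, hr]
  have cs := real_inner_le_norm (u' - u) (x0' - x0)
  nlinarith [norm_nonneg (x0' - x0), norm_nonneg (u' - u)]

lemma key_id {k : ℕ} {r : ℝ} (hr : 0 < r) (q x : Euc k) :
    ⟪q, x⟫ - r / 2 * ‖x‖ ^ 2 = ‖q‖ ^ 2 / (2 * r) - r / 2 * ‖r⁻¹ • q - x‖ ^ 2 := by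
  rw [norm_sub_sq_real, norm_smul, real_inner_smul_left, Real.norm_eq_abs,
    abs_of_pos (inv_pos.2 hr), mul_pow]
  field_simp
  ring

lemma conjSm_eq {k : ℕ} {f : Euc k → EReal} (hf : NiceFn f) {r : ℝ} (hr : 0 < r)
    {q x0 : Euc k} (h : UniqMin (proxObj f r (r⁻¹ • q)) x0) :
    conjSm f r q = ⟪q, x0⟫ - r / 2 * ‖x0‖ ^ 2 - (f x0).toReal := by
  have h0 := prox_finite hf h
  set v := ⟪q, x0⟫ - r / 2 * ‖x0‖ ^ 2 - (f x0).toReal with hv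
  have hsup : (⨆ x, ((⟪q, x⟫ - r / 2 * ‖x‖ ^ 2 : ℝ) : EReal) - f x) = (v : EReal) := by
    apply le_antisymm
    · apply iSup_le
      intro x
      by_cases hx : f x = ⊤
      · rw [hx, EReal.sub_top]; exact bot_le
      · rw [← EReal.coe_toReal hx (hf.1.1 x), ← EReal.coe_sub, EReal.coe_le_coe_iff]
        have hmin := prox_min_real hf h hx
        have i1 := key_id hr q x
        have i2 := key_id hr q x0
        linarith
    · have hv2 : (v : EReal) = ((⟪q, x0⟫ - r / 2 * ‖x0‖ ^ 2 : ℝ) : EReal) - f x0 := by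
        rw [← EReal.coe_toReal h0.1 h0.2, ← EReal.coe_sub]
      rw [hv2]
      exact le_iSup (fun x => ((⟪q, x⟫ - r / 2 * ‖x‖ ^ 2 : ℝ) : EReal) - f x) x0
  rw [conjSm, hsup, EReal.toReal_coe]

lemma conjSm_lower {k : ℕ} {f : Euc k → EReal} (hf : NiceFn f) {r : ℝ} (hr : 0 < r)
    {s s' y y' : Euc k} (hy : UniqMin (proxObj f r (r⁻¹ • s)) y)
    (hy' : UniqMin (proxObj f r (r⁻¹ • s')) y') :
    ⟪s' - s, y⟫ ≤ conjSm f r s' - conjSm f r s := by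
  have hy0 := prox_finite hf hy
  rw [conjSm_eq hf hr hy, conjSm_eq hf hr hy']
  have hmin := prox_min_real hf hy' hy0.1
  have i1 := key_id hr s' y
  have i2 := key_id hr s' y'
  have i3 := inner_sub_left (𝕜 := ℝ) s' s y
  linarith

lemma conjSm_upper {k : ℕ} {f : Euc k → EReal} (hf : NiceFn f) {r : ℝ} (hr : 0 < r)
    {q q' x0 x0' : Euc k} (h : UniqMin (proxObj f r (r⁻¹ • q)) x0)
    (h' : UniqMin (proxObj f r (r⁻¹ • q')) x0') :
    conjSm f r q' - conjSm f r q ≤ ⟪q' - q, x0⟫ + ‖q' - q‖ ^ 2 / r := by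
  have l2 := conjSm_lower hf hr h' h
  have hlip : ‖x0' - x0‖ ≤ ‖q' - q‖ / r := by
    have hl := prox_lip hf hr h h'
    have e : r⁻¹ • q' - r⁻¹ • q = r⁻¹ • (q' - q) := by rw [smul_sub]
    rw [e, norm_smul, Real.norm_eq_abs, abs_of_pos (inv_pos.2 hr)] at hl
    rw [div_eq_inv_mul]; exact hl
  have icomm : ⟪q - q', x0'⟫ = -⟪q' - q, x0'⟫ := by
    rw [← inner_neg_left]; congr 1; abel
  have isplit : ⟪q' - q, x0'⟫ = ⟪q' - q, x0⟫ + ⟪q' - q, x0' - x0⟫ := by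
    rw [← inner_add_right]; congr 1; abel
  have cs := real_inner_le_norm (q' - q) (x0' - x0)
  have hb : ‖q' - q‖ * ‖x0' - x0‖ ≤ ‖q' - q‖ ^ 2 / r := by
    have h2 := mul_le_mul_of_nonneg_left hlip (norm_nonneg (q' - q))
    calc ‖q' - q‖ * ‖x0' - x0‖ ≤ ‖q' - q‖ * (‖q' - q‖ / r) := h2
      _ = ‖q' - q‖ ^ 2 / r := by ring
  linarith

set_option maxHeartbeats 1000000 in
lemma master {n m : ℕ} {f : Euc n → EReal} {g : Euc m → EReal}
    {A : Euc n →L[ℝ] Euc m} (hf : NiceFn f) (hg : NiceFn g)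
    {ρ μ κ : ℝ} (hρ : 0 < ρ) (hμ : 0 < μ) (hκ : 0 < κ)
    {xρ : Euc m → Euc n} {xμ : Euc m → Euc m}
    (hxρ : ∀ p : Euc m,
      UniqMin (proxObj f ρ (ρ⁻¹ • (ContinuousLinearMap.adjoint A p))) (xρ p))
    (hxμ : ∀ p : Euc m, UniqMin (proxObj g μ (-(μ⁻¹ • p))) (xμ p)) (p p' : Euc m) :
    κ / 2 * ‖p' - p‖ ^ 2 ≤ thetaSmK f g A ρ μ κ p' - thetaSmK f g A ρ μ κ p
        - ⟪A (xρ p) - xμ p + κ • p, p' - p⟫ ∧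
    thetaSmK f g A ρ μ κ p' - thetaSmK f g A ρ μ κ p
        - ⟪A (xρ p) - xμ p + κ • p, p' - p⟫ ≤ (‖A‖ ^ 2 / ρ + 1 / μ + κ) * ‖p' - p‖ ^ 2 := by
  have hxμ' : ∀ p : Euc m, UniqMin (proxObj g μ (μ⁻¹ • (-p))) (xμ p) := by
    intro z; rw [smul_neg]; exact hxμ z
  have hqd : ContinuousLinearMap.adjoint A p' - ContinuousLinearMap.adjoint A p
      = ContinuousLinearMap.adjoint A (p' - p) := (map_sub _ _ _).symm
  have hinnf : ⟪ContinuousLinearMap.adjoint A p' - ContinuousLinearMap.adjoint A p, xρ p⟫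
      = ⟪p' - p, A (xρ p)⟫ := by
    rw [hqd]; exact ContinuousLinearMap.adjoint_inner_left A (xρ p) (p' - p)
  have hqnorm : ‖ContinuousLinearMap.adjoint A p' - ContinuousLinearMap.adjoint A p‖
      ≤ ‖A‖ * ‖p' - p‖ := by
    rw [hqd]
    calc ‖ContinuousLinearMap.adjoint A (p' - p)‖
        ≤ ‖ContinuousLinearMap.adjoint A‖ * ‖p' - p‖ := ContinuousLinearMap.le_opNorm _ _
      _ = ‖A‖ * ‖p' - p‖ := by rw [ContinuousLinearMap.adjoint.norm_map A]
  have lf := conjSm_lower hf hρ (hxρ p) (hxρ p')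
  have uf := conjSm_upper hf hρ (hxρ p) (hxρ p')
  rw [hinnf] at lf uf
  have hq2 : ‖ContinuousLinearMap.adjoint A p' - ContinuousLinearMap.adjoint A p‖ ^ 2 / ρ
      ≤ ‖A‖ ^ 2 / ρ * ‖p' - p‖ ^ 2 := by
    have h2 : ‖ContinuousLinearMap.adjoint A p' - ContinuousLinearMap.adjoint A p‖ ^ 2
        ≤ ‖A‖ ^ 2 * ‖p' - p‖ ^ 2 := by
      nlinarith [norm_nonneg (ContinuousLinearMap.adjoint A p' - ContinuousLinearMap.adjoint A p),
        hqnorm]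
    rw [div_mul_eq_mul_div]
    exact div_le_div_of_nonneg_right h2 hρ.le
  have hnd : (-p') - (-p) = -(p' - p) := by abel
  have hinng : ⟪(-p') - (-p), xμ p⟫ = -⟪p' - p, xμ p⟫ := by rw [hnd, inner_neg_left]
  have hnn : ‖(-p') - (-p)‖ = ‖p' - p‖ := by rw [hnd, norm_neg]
  have lg := conjSm_lower hg hμ (hxμ' p) (hxμ' p')
  have ug := conjSm_upper hg hμ (hxμ' p) (hxμ' p')
  rw [hinng] at lg ug
  rw [hnn] at ug
  have equad : κ / 2 * ‖p'‖ ^ 2 - κ / 2 * ‖p‖ ^ 2 - ⟪κ • p, p' - p⟫ = κ / 2 * ‖p' - p‖ ^ 2 := by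
    rw [real_inner_smul_left, inner_sub_right, real_inner_self_eq_norm_sq,
      norm_sub_sq_real p' p, real_inner_comm p p']
    ring
  have etot : ⟪A (xρ p) - xμ p + κ • p, p' - p⟫
      = ⟪p' - p, A (xρ p)⟫ - ⟪p' - p, xμ p⟫ + ⟪κ • p, p' - p⟫ := by
    rw [inner_add_left, inner_sub_left, real_inner_comm (A (xρ p)) (p' - p),
      real_inner_comm (xμ p) (p' - p)]
  have hT : ∀ z : Euc m, thetaSmK f g A ρ μ κ z
      = conjSm f ρ (ContinuousLinearMap.adjoint A z) + conjSm g μ (-z) + κ / 2 * ‖z‖ ^ 2 := by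
    intro z; simp only [thetaSmK, thetaSm]
  rw [hT p', hT p, etot]
  have hdivμ : ‖p' - p‖ ^ 2 / μ = 1 / μ * ‖p' - p‖ ^ 2 := by ring
  have hrhs : (‖A‖ ^ 2 / ρ + 1 / μ + κ) * ‖p' - p‖ ^ 2
      = ‖A‖ ^ 2 / ρ * ‖p' - p‖ ^ 2 + 1 / μ * ‖p' - p‖ ^ 2 + κ * ‖p' - p‖ ^ 2 := by ring
  have hκΔ : κ / 2 * ‖p' - p‖ ^ 2 ≤ κ * ‖p' - p‖ ^ 2 := by nlinarith [sq_nonneg ‖p' - p‖]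
  constructor
  · linarith [lf, lg, equad]
  · linarith [uf, ug, hq2, equad, hdivμ, hrhs, hκΔ]


set_option maxHeartbeats 1600000 in
/-- Second smoothing: `θ_{ρ,μ,κ}` is strongly convex with modulus `κ`, possesses a unique
global minimizer, is differentiable with gradient `A x_{ρ,p} - x_{μ,p} + κ p`, and this
gradient is Lipschitz continuous with constant `L(ρ,μ,κ) = ‖A‖²/ρ + 1/μ + κ`. -/
theorem stmt8 (n m : ℕ) (f : Euc n → EReal) (g : Euc m → EReal)
    (A : Euc n →L[ℝ] Euc m) (hf : NiceFn f) (hg : NiceFn g)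
    (ρ μ κ : ℝ) (hρ : 0 < ρ) (hμ : 0 < μ) (hκ : 0 < κ)
    (xρ : Euc m → Euc n) (xμ : Euc m → Euc m)
    (hxρ : ∀ p : Euc m,
      UniqMin (proxObj f ρ (ρ⁻¹ • (ContinuousLinearMap.adjoint A p))) (xρ p))
    (hxμ : ∀ p : Euc m, UniqMin (proxObj g μ (-(μ⁻¹ • p))) (xμ p)) :
    (∀ p q : Euc m, ∀ t : ℝ, 0 < t → t < 1 →
      thetaSmK f g A ρ μ κ (t • p + (1 - t) • q)
        ≤ t * thetaSmK f g A ρ μ κ p + (1 - t) * thetaSmK f g A ρ μ κ q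
          - κ / 2 * t * (1 - t) * ‖p - q‖ ^ 2) ∧
    (∃! pDS : Euc m, ∀ p, thetaSmK f g A ρ μ κ pDS ≤ thetaSmK f g A ρ μ κ p) ∧
    (∀ p : Euc m, HasGradientAt (thetaSmK f g A ρ μ κ) (A (xρ p) - xμ p + κ • p) p) ∧
    LipschitzWith (‖A‖ ^ 2 / ρ + 1 / μ + κ).toNNReal
      (fun p => A (xρ p) - xμ p + κ • p) := by
  have key := fun p p' => master hf hg hρ hμ hκ hxρ hxμ p p'
  -- strong convexity
  have sc : ∀ p q : Euc m, ∀ t : ℝ, 0 < t → t < 1 →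
      thetaSmK f g A ρ μ κ (t • p + (1 - t) • q)
        ≤ t * thetaSmK f g A ρ μ κ p + (1 - t) * thetaSmK f g A ρ μ κ q
          - κ / 2 * t * (1 - t) * ‖p - q‖ ^ 2 := by
    intro p q t ht0 ht1
    set z := t • p + (1 - t) • q with hz
    have l1 := (key z p).1
    have l2 := (key z q).1
    have hpz : p - z = (1 - t) • (p - q) := by rw [hz]; module
    have hqz : q - z = (-t) • (p - q) := by rw [hz]; module
    have np : ‖p - z‖ ^ 2 = (1 - t) ^ 2 * ‖p - q‖ ^ 2 := by
      rw [hpz, norm_smul, Real.norm_eq_abs, mul_pow, sq_abs]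
    have nq : ‖q - z‖ ^ 2 = t ^ 2 * ‖p - q‖ ^ 2 := by
      rw [hqz, norm_smul, Real.norm_eq_abs, abs_neg, abs_of_pos ht0, mul_pow]
    have ip : ⟪A (xρ z) - xμ z + κ • z, p - z⟫
        = (1 - t) * ⟪A (xρ z) - xμ z + κ • z, p - q⟫ := by
      rw [hpz, real_inner_smul_right]
    have iq : ⟪A (xρ z) - xμ z + κ • z, q - z⟫
        = (-t) * ⟪A (xρ z) - xμ z + κ • z, p - q⟫ := by
      rw [hqz, real_inner_smul_right]
    rw [ip, np] at l1
    rw [iq, nq] at l2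
    have m1 := mul_le_mul_of_nonneg_left l1 ht0.le
    have m2 := mul_le_mul_of_nonneg_left l2 (by linarith : (0:ℝ) ≤ 1 - t)
    nlinarith [m1, m2]
  -- gradient
  have grad : ∀ p : Euc m,
      HasGradientAt (thetaSmK f g A ρ μ κ) (A (xρ p) - xμ p + κ • p) p := by
    intro p
    rw [hasGradientAt_iff_isLittleO, Asymptotics.isLittleO_iff]
    intro c hc
    have hL : 0 < ‖A‖ ^ 2 / ρ + 1 / μ + κ := by positivity
    have hδ : 0 < c / (‖A‖ ^ 2 / ρ + 1 / μ + κ) := by positivity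
    filter_upwards [Metric.ball_mem_nhds p hδ] with x hx
    rw [Metric.mem_ball, dist_eq_norm] at hx
    have k1 := (key p x).1
    have k2 := (key p x).2
    have hn0 : (0:ℝ) ≤ ‖x - p‖ := norm_nonneg _
    have habs : ‖thetaSmK f g A ρ μ κ x - thetaSmK f g A ρ μ κ p
        - ⟪A (xρ p) - xμ p + κ • p, x - p⟫‖
        ≤ (‖A‖ ^ 2 / ρ + 1 / μ + κ) * ‖x - p‖ ^ 2 := by
      rw [Real.norm_eq_abs, abs_le]
      constructor
      · nlinarith [k1, sq_nonneg ‖x - p‖, hκ, hL]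
      · exact k2
    have hLδ : (‖A‖ ^ 2 / ρ + 1 / μ + κ) * (c / (‖A‖ ^ 2 / ρ + 1 / μ + κ)) = c :=
      mul_div_cancel₀ c hL.ne'
    have h1 : (‖A‖ ^ 2 / ρ + 1 / μ + κ) * ‖x - p‖ ≤ c := by
      rw [← hLδ]
      exact mul_le_mul_of_nonneg_left hx.le hL.le
    calc ‖thetaSmK f g A ρ μ κ x - thetaSmK f g A ρ μ κ p
        - ⟪A (xρ p) - xμ p + κ • p, x - p⟫‖
        ≤ (‖A‖ ^ 2 / ρ + 1 / μ + κ) * ‖x - p‖ ^ 2 := habs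
      _ = ((‖A‖ ^ 2 / ρ + 1 / μ + κ) * ‖x - p‖) * ‖x - p‖ := by ring
      _ ≤ c * ‖x - p‖ := mul_le_mul_of_nonneg_right h1 hn0
  -- unique minimizer
  have mins : ∃! pDS : Euc m, ∀ p, thetaSmK f g A ρ μ κ pDS ≤ thetaSmK f g A ρ μ κ p := by
    have hcont : Continuous (thetaSmK f g A ρ μ κ) :=
      continuous_iff_continuousAt.2 fun p => (grad p).continuousAt
    set N := ‖A (xρ 0) - xμ 0 + κ • (0 : Euc m)‖ with hN
    have hN0 : 0 ≤ N := norm_nonneg _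
    set R := 2 * N / κ + 1 with hR
    have hR0 : 0 < R := by positivity
    obtain ⟨pstar, hmem, hmin⟩ := (isCompact_closedBall (0 : Euc m) R).exists_isMinOn
      ⟨0, Metric.mem_closedBall_self hR0.le⟩ hcont.continuousOn
    have hminp := isMinOn_iff.1 hmin
    have hglobal : ∀ y, thetaSmK f g A ρ μ κ pstar ≤ thetaSmK f g A ρ μ κ y := by
      intro y
      by_cases hy : y ∈ Metric.closedBall (0 : Euc m) R
      · exact hminp y hy
      · have hy' : R < ‖y‖ := by
          rw [Metric.mem_closedBall, dist_zero_right, not_le] at hy; exact hy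
        have k1 := (key 0 y).1
        have hy0 : y - 0 = y := sub_zero y
        rw [hy0] at k1
        have hinner : -(N * ‖y‖) ≤ ⟪A (xρ 0) - xμ 0 + κ • (0 : Euc m), y⟫ := by
          have h2 := real_inner_le_norm (A (xρ 0) - xμ 0 + κ • (0 : Euc m)) (-y)
          rw [inner_neg_right, norm_neg] at h2
          linarith
        have h0 := hminp 0 (Metric.mem_closedBall_self hR0.le)
        have hκR : κ / 2 * R = N + κ / 2 := by
          rw [hR]; field_simp
        have hineq : N + κ / 2 < κ / 2 * ‖y‖ := by
          have h3 := mul_lt_mul_of_pos_left hy' (by positivity : (0:ℝ) < κ / 2)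
          rw [hκR] at h3; exact h3
        have hbig : 0 < κ / 2 * ‖y‖ ^ 2 - N * ‖y‖ := by
          have hy1 : 0 < ‖y‖ := lt_trans hR0 hy'
          have h4 : 0 < ‖y‖ * (κ / 2 * ‖y‖ - N) := mul_pos hy1 (by linarith)
          nlinarith [h4]
        linarith [k1, hinner, h0]
    refine ⟨pstar, hglobal, ?_⟩
    intro y hy
    by_contra hne
    have hd : 0 < ‖y - pstar‖ := by
      rw [norm_pos_iff]; exact sub_ne_zero_of_ne hne
    have hsc := sc y pstar (1/2) (by norm_num) (by norm_num)
    have h1 := hglobal ((1/2 : ℝ) • y + (1 - 1/2 : ℝ) • pstar)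
    have h2 := hglobal y
    have h3 := hy pstar
    nlinarith [hsc, h1, h2, h3, hκ, mul_pos hd hd]
  -- Lipschitz gradient
  have lip : LipschitzWith (‖A‖ ^ 2 / ρ + 1 / μ + κ).toNNReal
      (fun p => A (xρ p) - xμ p + κ • p) := by
    have hL0 : (0:ℝ) ≤ ‖A‖ ^ 2 / ρ + 1 / μ + κ := by positivity
    refine LipschitzWith.of_dist_le_mul fun x y => ?_
    rw [Real.coe_toNNReal _ hL0, dist_eq_norm, dist_eq_norm]
    have e : (A (xρ x) - xμ x + κ • x) - (A (xρ y) - xμ y + κ • y)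
        = A (xρ x - xρ y) + (-(xμ x - xμ y)) + κ • (x - y) := by
      rw [map_sub, smul_sub]; abel
    rw [e]
    have b1 : ‖xρ x - xρ y‖ ≤ ‖A‖ / ρ * ‖x - y‖ := by
      have hl := prox_lip hf hρ (hxρ y) (hxρ x)
      have e2 : ρ⁻¹ • (ContinuousLinearMap.adjoint A x) - ρ⁻¹ • (ContinuousLinearMap.adjoint A y)
          = ρ⁻¹ • (ContinuousLinearMap.adjoint A (x - y)) := by
        rw [map_sub, smul_sub]
      rw [e2, norm_smul, Real.norm_eq_abs, abs_of_pos (inv_pos.2 hρ)] at hl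
      have hn := ContinuousLinearMap.le_opNorm (ContinuousLinearMap.adjoint A) (x - y)
      rw [ContinuousLinearMap.adjoint.norm_map A] at hn
      have h5 := mul_le_mul_of_nonneg_left hn (inv_pos.2 hρ).le
      have hr : ρ⁻¹ * (‖A‖ * ‖x - y‖) = ‖A‖ / ρ * ‖x - y‖ := by ring
      linarith [hl.trans h5]
    have b2 : ‖xμ x - xμ y‖ ≤ 1 / μ * ‖x - y‖ := by
      have hl := prox_lip hg hμ (hxμ y) (hxμ x)
      have e2 : -(μ⁻¹ • x) - -(μ⁻¹ • y) = μ⁻¹ • (y - x) := by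
        rw [smul_sub]; abel
      rw [e2, norm_smul, Real.norm_eq_abs, abs_of_pos (inv_pos.2 hμ), norm_sub_rev y x] at hl
      have hr : μ⁻¹ * ‖x - y‖ = 1 / μ * ‖x - y‖ := by ring
      linarith
    have b3 : ‖A (xρ x - xρ y)‖ ≤ ‖A‖ * (‖A‖ / ρ * ‖x - y‖) := by
      have := ContinuousLinearMap.le_opNorm A (xρ x - xρ y)
      have h6 := mul_le_mul_of_nonneg_left b1 (norm_nonneg A)
      linarith
    calc ‖A (xρ x - xρ y) + (-(xμ x - xμ y)) + κ • (x - y)‖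
        ≤ ‖A (xρ x - xρ y)‖ + ‖-(xμ x - xμ y)‖ + ‖κ • (x - y)‖ := norm_add₃_le
      _ ≤ ‖A‖ * (‖A‖ / ρ * ‖x - y‖) + 1 / μ * ‖x - y‖ + κ * ‖x - y‖ := by
          rw [norm_neg, norm_smul, Real.norm_eq_abs, abs_of_pos hκ]
          exact add_le_add (add_le_add b3 b2) le_rfl
      _ = (‖A‖ ^ 2 / ρ + 1 / μ + κ) * ‖x - y‖ := by ring
  exact ⟨sc, mins, grad, lip⟩
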